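/- The split primitive preserves point-set semantics: for any temporal relation R, start time s, and window width w > 0, the relation split_{s,w}(R) covers exactly the same time points for each value as R does. -/
import Mathlib


/-- Point-set semantics over the integer time domain. -/
def semZ {α : Type*} (R : Set (α × ℤ × ℤ)) (x : α) : Set ℤ :=
  {t | ∃ a b, (x, a, b) ∈ R ∧ a ≤ t ∧ t < b}

/-- `split s w R` replaces each tuple `(x,[a,b))` by its nonempty
intersections with the windows `[s+k·w, s+(k+1)·w)`, `k ≥ 0`. -/
def split {α : Type*} (s w : ℤ) (R : Set (α × ℤ × ℤ)) : Set (α × ℤ × ℤ) :=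
  {p | ∃ a b k, (p.1, a, b) ∈ R ∧ 0 ≤ k ∧
    p.2.1 = max a (s + k * w) ∧ p.2.2 = min b (s + (k + 1) * w) ∧
    p.2.1 < p.2.2}

/-- Split preserves point-set semantics. -/
theorem split_preserves_sem {α : Type*} (s w : ℤ) (hw : 0 < w)
    (R : Set (α × ℤ × ℤ)) (hfin : R.Finite)
    (hvalid : ∀ x a b, (x, a, b) ∈ R → a < b)
    (hstart : ∀ x a b, (x, a, b) ∈ R → s ≤ a) :
    semZ (split s w R) = semZ R := by
  funext x
  ext t
  constructor
  · rintro ⟨a', b', ⟨a, b, k, hR, hk, ha', hb', hlt⟩, hat, htb⟩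
    simp only at ha' hb'
    subst ha' hb'
    exact ⟨a, b, hR, le_trans (le_max_left _ _) hat,
      lt_of_lt_of_le htb (min_le_left _ _)⟩
  · rintro ⟨a, b, hR, hat, htb⟩
    set k := (t - s) / w with hkdef
    have hts : 0 ≤ t - s := by have := hstart x a b hR; omega
    have hk0 : 0 ≤ k := Int.ediv_nonneg hts (le_of_lt hw)
    have hmod : w * k + (t - s) % w = t - s := Int.mul_ediv_add_emod (t - s) w
    have hr0 : 0 ≤ (t - s) % w := Int.emod_nonneg _ (ne_of_gt hw)
    have hrw : (t - s) % w < w := Int.emod_lt_of_pos _ hw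
    have hlow : s + k * w ≤ t := by nlinarith [hmod]
    have hhigh : t < s + (k + 1) * w := by nlinarith [hmod]
    exact ⟨max a (s + k * w), min b (s + (k + 1) * w),
      ⟨a, b, k, hR, hk0, rfl, rfl,
        lt_of_le_of_lt (max_le hat hlow) (lt_min htb hhigh)⟩,
      max_le hat hlow, lt_min htb hhigh⟩
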